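/- If T1 and T2 are q-commuting contractions on H and T = T1T2, then for every h ∈ H, ‖D_{T1} T2 h‖² + ‖D_{T2} h‖² = ‖D_{T1} h‖² + ‖D_{T2} T1 h‖². Consequently, the map (D_{T1} T2 h, D_{T2} h) ↦ (D_{T1} h, D_{T2} T1 h) extends to an isometry on the relevant closed subspaces. -/

import Mathlib

open ContinuousLinearMap

/-- Defect identity: if `DS² = 1 - S*S` with `DS` self-adjoint, then
`‖DS x‖² = ‖x‖² - ‖S x‖²`. -/
lemma defect_norm_sq
    {H : Type*} [NormedAddCommGroup H] [InnerProductSpace ℂ H] [CompleteSpace H]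
    (S DS : H →L[ℂ] H) (hsa : IsSelfAdjoint DS)
    (hsq : DS * DS = 1 - adjoint S * S) (x : H) :
    ‖DS x‖ ^ 2 = ‖x‖ ^ 2 - ‖S x‖ ^ 2 := by
  have h1 : (inner ℂ (DS x) (DS x) : ℂ) = inner ℂ x x - inner ℂ (S x) (S x) := by
    have hadj : adjoint DS = DS := hsa.adjoint_eq
    calc (inner ℂ (DS x) (DS x) : ℂ)
        = inner ℂ x (adjoint DS (DS x)) := (adjoint_inner_right DS x (DS x)).symm
      _ = inner ℂ x ((DS * DS) x) := by rw [hadj]; rfl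
      _ = inner ℂ x x - inner ℂ (S x) (S x) := by
          rw [hsq]
          have h2 : ((1 - adjoint S * S) x : H) = x - adjoint S (S x) := rfl
          rw [h2, inner_sub_right, adjoint_inner_right]
  have h3 := congrArg RCLike.re h1
  simpa [inner_self_eq_norm_sq, map_sub, ← Complex.ofReal_pow, Complex.ofReal_re] using h3

/-- For `q`-commuting contractions `T1, T2` with `T = T1 T2`:
`‖D_{T1} T2 h‖² + ‖D_{T2} h‖² = ‖D_{T1} h‖² + ‖D_{T2} T1 h‖²` for every `h`, and
consequently the map `(D_{T1} T2 h, D_{T2} h) ↦ (D_{T1} h, D_{T2} T1 h)` extends to an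
isometry from the closure of the range of `h ↦ (D_{T1} T2 h, D_{T2} h)` (inside the
ℓ²-direct sum `H ⊕₂ H`). -/
theorem defect_U_isometry
    {H : Type*} [NormedAddCommGroup H] [InnerProductSpace ℂ H] [CompleteSpace H]
    (q : ℂ) (hq : ‖q‖ = 1)
    (T1 T2 : H →L[ℂ] H) (hT1 : ‖T1‖ ≤ 1) (hT2 : ‖T2‖ ≤ 1)
    (hcomm : T1 * T2 = q • (T2 * T1))
    (DT1 DT2 : H →L[ℂ] H)
    (hDT1 : DT1.IsPositive) (hDT2 : DT2.IsPositive)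
    (hDT1sq : DT1 * DT1 = 1 - adjoint T1 * T1)
    (hDT2sq : DT2 * DT2 = 1 - adjoint T2 * T2) :
    (∀ h : H, ‖DT1 (T2 h)‖ ^ 2 + ‖DT2 h‖ ^ 2 = ‖DT1 h‖ ^ 2 + ‖DT2 (T1 h)‖ ^ 2) ∧
    ∀ L : H →ₗ[ℂ] WithLp 2 (H × H),
      (∀ h : H, L h = (WithLp.equiv 2 (H × H)).symm (DT1 (T2 h), DT2 h)) →
      ∃ Φ : (LinearMap.range L).topologicalClosure →ₗᵢ[ℂ] WithLp 2 (H × H),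
        ∀ (h : H) (x : (LinearMap.range L).topologicalClosure),
          (x : WithLp 2 (H × H)) = L h →
          Φ x = (WithLp.equiv 2 (H × H)).symm (DT1 h, DT2 (T1 h)) := by
  have key : ∀ h : H,
      ‖DT1 (T2 h)‖ ^ 2 + ‖DT2 h‖ ^ 2 = ‖DT1 h‖ ^ 2 + ‖DT2 (T1 h)‖ ^ 2 := by
    intro h
    have e1 := defect_norm_sq T1 DT1 hDT1.isSelfAdjoint hDT1sq (T2 h)
    have e2 := defect_norm_sq T2 DT2 hDT2.isSelfAdjoint hDT2sq h
    have e3 := defect_norm_sq T1 DT1 hDT1.isSelfAdjoint hDT1sq h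
    have e4 := defect_norm_sq T2 DT2 hDT2.isSelfAdjoint hDT2sq (T1 h)
    have e5 : ‖T1 (T2 h)‖ = ‖T2 (T1 h)‖ := by
      have : T1 (T2 h) = (T1 * T2) h := rfl
      rw [this, hcomm]
      have : ((q • (T2 * T1)) h : H) = q • (T2 (T1 h)) := rfl
      rw [this, norm_smul, hq, one_mul]
    rw [e1, e2, e3, e4, e5]; ring
  refine ⟨key, fun L hL => ?_⟩
  -- the target map
  set M : H →ₗ[ℂ] WithLp 2 (H × H) :=
    (WithLp.linearEquiv 2 ℂ (H × H)).symm.toLinearMap ∘ₗ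
      ((DT1 : H →L[ℂ] H).toLinearMap.prod ((DT2.comp T1)).toLinearMap) with hM
  have hMapp : ∀ h : H, M h = (WithLp.equiv 2 (H × H)).symm (DT1 h, DT2 (T1 h)) := by
    intro h; rfl
  -- norms agree
  have hnorm : ∀ h : H, ‖L h‖ = ‖M h‖ := by
    intro h
    have h1 : ‖L h‖ ^ 2 = ‖M h‖ ^ 2 := by
      rw [hL h, hMapp h]
      rw [WithLp.prod_norm_sq_eq_of_L2, WithLp.prod_norm_sq_eq_of_L2]
      exact key h
    exact (sq_eq_sq₀ (norm_nonneg (L h)) (norm_nonneg (M h))).mp h1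
  have hker : LinearMap.ker L ≤ LinearMap.ker M := by
    intro x hx
    have : ‖M x‖ = 0 := by rw [← hnorm]; simpa using congrArg norm hx
    simpa [LinearMap.mem_ker] using norm_eq_zero.mp this
  -- the isometry on the range
  let e0 := L.quotKerEquivRange
  let Mq := (LinearMap.ker L).liftQ M hker
  let φlin : LinearMap.range L →ₗ[ℂ] WithLp 2 (H × H) := Mq ∘ₗ e0.symm.toLinearMap
  have hφapp : ∀ (y : LinearMap.range L) (h : H), (y : WithLp 2 (H × H)) = L h →
      φlin y = M h := by
    intro y h hy
    have he : e0 (Submodule.Quotient.mk h) = y := by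
      apply Subtype.ext
      rw [hy]
      exact LinearMap.quotKerEquivRange_apply_mk L h
    have : e0.symm y = Submodule.Quotient.mk h := by
      rw [← he]; exact e0.symm_apply_apply _
    simp only [φlin, LinearMap.comp_apply, LinearEquiv.coe_toLinearMap, this]
    rfl
  have hφnorm : ∀ y : LinearMap.range L, ‖φlin y‖ = ‖y‖ := by
    rintro ⟨_, h, rfl⟩
    rw [hφapp ⟨L h, h, rfl⟩ h rfl]
    show ‖M h‖ = ‖L h‖
    exact (hnorm h).symm
  let φ : LinearMap.range L →ₗᵢ[ℂ] WithLp 2 (H × H) := ⟨φlin, hφnorm⟩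
  -- the inclusion into the closure
  set K := (LinearMap.range L).topologicalClosure with hK
  let einc : LinearMap.range L →L[ℂ] K :=
    { toLinearMap := Submodule.inclusion (LinearMap.range L).le_topologicalClosure
      cont := continuous_induced_rng.mpr continuous_subtype_val }
  have h_dense : DenseRange einc := by
    intro y
    rw [closure_subtype]
    have himg : (Subtype.val '' Set.range einc : Set (WithLp 2 (H × H)))
        = (LinearMap.range L : Set (WithLp 2 (H × H))) := by
      ext z
      constructor
      · rintro ⟨_, ⟨w, rfl⟩, rfl⟩; exact w.2
      · intro hz; exact ⟨einc ⟨z, hz⟩, ⟨⟨z, hz⟩, rfl⟩, rfl⟩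
    rw [himg, ← Submodule.topologicalClosure_coe]
    exact y.2
  have h_isom : Isometry einc := AddMonoidHomClass.isometry_of_norm _ (fun x => rfl)
  have h_ind : IsUniformInducing einc := h_isom.isUniformInducing
  -- extend
  let Φclm := φ.toContinuousLinearMap.extend einc
  have hΦe : ∀ y : LinearMap.range L, Φclm (einc y) = φ y :=
    fun y => ContinuousLinearMap.extend_eq _ h_dense h_ind y
  have hΦnorm : ∀ x : K, ‖Φclm x‖ = ‖x‖ := by
    have : IsClosed {x : K | ‖Φclm x‖ = ‖x‖} :=
      isClosed_eq (continuous_norm.comp Φclm.continuous) continuous_norm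
    intro x
    refine h_dense.induction_on x this fun y => ?_
    rw [hΦe y]
    exact (hφnorm y).trans rfl
  refine ⟨⟨Φclm.toLinearMap, hΦnorm⟩, fun h x hx => ?_⟩
  have hmem : L h ∈ LinearMap.range L := ⟨h, rfl⟩
  have hxe : x = einc ⟨L h, hmem⟩ := by
    apply Subtype.ext; exact hx
  show Φclm x = _
  rw [hxe, hΦe ⟨L h, hmem⟩, ← hMapp h]
  exact hφapp ⟨L h, hmem⟩ h rfl
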